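/- Let Λ be a k-graph and x ∈ Λ^∞. Suppose there exists n ∈ ℕ^k such that every element of x(n)Λ^∞ that is frequently divertable to [x] is shift equivalent to x. Then for every y ∈ [x] there exists m ∈ ℕ^k such that every element of y(m)Λ^∞ that is frequently divertable to [x] is shift equivalent to x. -/

import Mathlib

/-- A `k`-graph: a countable small category (objects being identified with their
identity morphisms, so that the morphism set `M` carries everything) together with a
degree functor `d : Λ → ℕ^k` satisfying the unique factorisation property. -/
structure KGraph (k : ℕ) : Type 1 where
  M : Type
  countableM : Countable M
  rng : M → M
  src : M → M
  comp : M → M → M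
  d : M → Fin k → ℕ
  src_src : ∀ a, src (src a) = src a
  rng_src : ∀ a, rng (src a) = src a
  src_rng : ∀ a, src (rng a) = rng a
  rng_rng : ∀ a, rng (rng a) = rng a
  comp_src_self : ∀ a, comp a (src a) = a
  rng_comp_self : ∀ a, comp (rng a) a = a
  rng_comp : ∀ a b, src a = rng b → rng (comp a b) = rng a
  src_comp : ∀ a b, src a = rng b → src (comp a b) = src b
  comp_assoc : ∀ a b c, src a = rng b → src b = rng c →
    comp (comp a b) c = comp a (comp b c)
  d_src : ∀ a, d (src a) = 0
  d_comp : ∀ a b, src a = rng b → d (comp a b) = d a + d b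
  factor : ∀ a (m n : Fin k → ℕ), d a = m + n →
    ∃! p : M × M, src p.1 = rng p.2 ∧ comp p.1 p.2 = a ∧ d p.1 = m ∧ d p.2 = n

namespace KGraph

variable {k : ℕ}

/-- The objects of `Λ`, identified with the identity morphisms. -/
def IsObj (Λ : KGraph k) (v : Λ.M) : Prop := Λ.rng v = v

/-- `Λ` is row-finite: each `vΛ^m` is finite. -/
def RowFinite (Λ : KGraph k) : Prop :=
  ∀ v, Λ.IsObj v → ∀ m : Fin k → ℕ, {a : Λ.M | Λ.rng a = v ∧ Λ.d a = m}.Finite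

/-- `Λ` has no sources: each `vΛ^m` is nonempty. -/
def NoSources (Λ : KGraph k) : Prop :=
  ∀ v, Λ.IsObj v → ∀ m : Fin k → ℕ, ∃ a : Λ.M, Λ.rng a = v ∧ Λ.d a = m

end KGraph

/-- An infinite path of a `k`-graph `Λ`: a degree-preserving functor `x : Ω_k → Λ`,
recorded by its values `seg m n _ = x(m, n)` on the morphisms `(m, n)` (for `m ≤ n`)
of `Ω_k`; the vertex `x(m)` is `seg m m _`. -/
structure InfPath {k : ℕ} (Λ : KGraph k) where
  seg : ∀ m n : Fin k → ℕ, m ≤ n → Λ.M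
  d_seg : ∀ m n (h : m ≤ n), Λ.d (seg m n h) = n - m
  rng_seg : ∀ m n (h : m ≤ n), Λ.rng (seg m n h) = seg m m le_rfl
  src_seg : ∀ m n (h : m ≤ n), Λ.src (seg m n h) = seg n n le_rfl
  comp_seg : ∀ m n p (h1 : m ≤ n) (h2 : n ≤ p),
    Λ.comp (seg m n h1) (seg n p h2) = seg m p (h1.trans h2)

namespace InfPath

variable {k : ℕ} {Λ : KGraph k}

/-- The vertex `x(n)` of an infinite path `x`. -/
def vert (x : InfPath Λ) (n : Fin k → ℕ) : Λ.M := x.seg n n le_rfl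

/-- The shift `σ^p(x)`, given by `σ^p(x)(m, n) = x(m + p, n + p)`. -/
def shift (x : InfPath Λ) (p : Fin k → ℕ) : InfPath Λ where
  seg m n h := x.seg (m + p) (n + p) (add_le_add h le_rfl)
  d_seg m n h := by
    rw [x.d_seg]
    funext i
    simp only [Pi.sub_apply, Pi.add_apply]
    omega
  rng_seg m n h := x.rng_seg _ _ _
  src_seg m n h := x.src_seg _ _ _
  comp_seg m n p' h1 h2 := x.comp_seg _ _ _ _ _

/-- `x` is shift equivalent to `y` with lag `n ∈ ℤ^k`: there are `p, q ∈ ℕ^k` with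
`p - q = n` and `σ^p(x) = σ^q(y)`. -/
def ShiftEquivLag (x y : InfPath Λ) (n : Fin k → ℤ) : Prop :=
  ∃ p q : Fin k → ℕ, (fun i => (p i : ℤ) - (q i : ℤ)) = n ∧ x.shift p = y.shift q

/-- `x` is shift equivalent to `y`. -/
def ShiftEquiv (x y : InfPath Λ) : Prop := ∃ n : Fin k → ℤ, ShiftEquivLag x y n

/-- `x` is frequently divertable to `[y]`: for every `n ∈ ℕ^k` there is a path in
`x(n)Λ^∞` which is shift equivalent to `y`. -/
def FreqDiv (x y : InfPath Λ) : Prop :=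
  ∀ n : Fin k → ℕ, ∃ z : InfPath Λ, z.vert 0 = x.vert n ∧ ShiftEquiv z y

/-- The cylinder topology on `Λ^∞`, generated by the cylinder sets
`Z(α) = {x : x(0, d(α)) = α}` for morphisms `α` of `Λ`. -/
instance : TopologicalSpace (InfPath Λ) :=
  TopologicalSpace.generateFrom
    {S | ∃ a : Λ.M, S = {x : InfPath Λ | x.seg 0 (Λ.d a) (zero_le : 0 ≤ Λ.d a) = a}}

end InfPath

namespace KGraph

variable {k : ℕ}

theorem d_self_sub (Λ : KGraph k) {a : Λ.M} {m : Fin k → ℕ} (hm : m ≤ Λ.d a) :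
    Λ.d a = m + (Λ.d a - m) := by
  funext i; have h2 : m i ≤ Λ.d a i := hm i; simp only [Pi.add_apply, Pi.sub_apply]; omega

/-- Factorisation of `a` at degree `m ≤ d a`. -/
noncomputable def fac (Λ : KGraph k) (a : Λ.M) (m : Fin k → ℕ) (hm : m ≤ Λ.d a) : Λ.M × Λ.M :=
  (Λ.factor a m (Λ.d a - m) (Λ.d_self_sub hm)).exists.choose

theorem fac_spec (Λ : KGraph k) (a : Λ.M) (m : Fin k → ℕ) (hm : m ≤ Λ.d a) :
    Λ.src (Λ.fac a m hm).1 = Λ.rng (Λ.fac a m hm).2 ∧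
      Λ.comp (Λ.fac a m hm).1 (Λ.fac a m hm).2 = a ∧
      Λ.d (Λ.fac a m hm).1 = m ∧ Λ.d (Λ.fac a m hm).2 = Λ.d a - m :=
  (Λ.factor a m (Λ.d a - m) (Λ.d_self_sub hm)).exists.choose_spec

theorem fac_eq (Λ : KGraph k) {a u v : Λ.M} {m : Fin k → ℕ} (hm : m ≤ Λ.d a)
    (h1 : Λ.src u = Λ.rng v) (h2 : Λ.comp u v = a) (h3 : Λ.d u = m) :
    Λ.fac a m hm = (u, v) := by
  have hdv : Λ.d v = Λ.d a - m := by
    have hd := Λ.d_comp u v h1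
    rw [h2, h3] at hd
    funext i
    have := congrFun hd i
    simp only [Pi.add_apply, Pi.sub_apply] at this ⊢
    omega
  exact (Λ.factor a m (Λ.d a - m) (Λ.d_self_sub hm)).unique
    (Λ.fac_spec a m hm) ⟨h1, h2, h3, hdv⟩

end KGraph

namespace InfPath

variable {k : ℕ} {Λ : KGraph k}

theorem ext' {x y : InfPath Λ}
    (h : ∀ m n (hmn : m ≤ n), x.seg m n hmn = y.seg m n hmn) : x = y := by
  cases x; cases y
  congr 1
  funext m n hmn
  exact h m n hmn

theorem seg_congr (x : InfPath Λ) {m n m' n' : Fin k → ℕ} (hm : m = m') (hn : n = n')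
    (h : m ≤ n) (h' : m' ≤ n') : x.seg m n h = x.seg m' n' h' := by
  subst hm; subst hn; rfl

theorem vert_congr (x : InfPath Λ) {m m' : Fin k → ℕ} (hm : m = m') :
    x.vert m = x.vert m' := by subst hm; rfl

@[simp] theorem shift_seg (x : InfPath Λ) (p m n : Fin k → ℕ) (h : m ≤ n) :
    (x.shift p).seg m n h = x.seg (m + p) (n + p) (add_le_add h le_rfl) := rfl

@[simp] theorem shift_vert (x : InfPath Λ) (p m : Fin k → ℕ) :
    (x.shift p).vert m = x.vert (m + p) := rfl

theorem shift_zero (x : InfPath Λ) : x.shift 0 = x :=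
  ext' fun m n hmn => x.seg_congr (add_zero m) (add_zero n) _ _

theorem shift_shift (x : InfPath Λ) (p q : Fin k → ℕ) :
    (x.shift p).shift q = x.shift (p + q) :=
  ext' fun m n hmn => x.seg_congr (by ring) (by ring) _ _

theorem ShiftEquiv.symm {x y : InfPath Λ} (h : ShiftEquiv x y) : ShiftEquiv y x := by
  obtain ⟨n, p, q, -, he⟩ := h
  exact ⟨_, q, p, rfl, he.symm⟩

theorem ShiftEquiv.trans {x y z : InfPath Λ} (h1 : ShiftEquiv x y) (h2 : ShiftEquiv y z) :
    ShiftEquiv x z := by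
  obtain ⟨n1, p, q, -, he1⟩ := h1
  obtain ⟨n2, s, t, -, he2⟩ := h2
  refine ⟨_, p + s, t + q, rfl, ?_⟩
  calc x.shift (p + s) = (x.shift p).shift s := (shift_shift x p s).symm
    _ = (y.shift q).shift s := by rw [he1]
    _ = (y.shift s).shift q := by rw [shift_shift, shift_shift, add_comm]
    _ = (z.shift t).shift q := by rw [he2]
    _ = z.shift (t + q) := shift_shift z t q

theorem shiftEquiv_shift (x : InfPath Λ) (q : Fin k → ℕ) : ShiftEquiv (x.shift q) x :=
  ⟨_, 0, q, rfl, by rw [shift_zero]⟩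

end InfPath

namespace InfPath

variable {k : ℕ} {Λ : KGraph k}

theorem rng_seg' (z : InfPath Λ) (m n : Fin k → ℕ) (h : m ≤ n) :
    Λ.rng (z.seg m n h) = z.vert m := z.rng_seg m n h

theorem src_seg' (z : InfPath Λ) (m n : Fin k → ℕ) (h : m ≤ n) :
    Λ.src (z.seg m n h) = z.vert n := z.src_seg m n h

/-- `a` followed by `z(0, n)`. -/
noncomputable def big (z : InfPath Λ) (a : Λ.M) (n : Fin k → ℕ) : Λ.M :=
  Λ.comp a (z.seg 0 n zero_le)

theorem src_a_rng (z : InfPath Λ) (a : Λ.M) (ha : Λ.src a = z.vert 0) (n : Fin k → ℕ) :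
    Λ.src a = Λ.rng (z.seg 0 n zero_le) := by
  rw [z.rng_seg']; exact ha

theorem d_big (z : InfPath Λ) (a : Λ.M) (ha : Λ.src a = z.vert 0) (n : Fin k → ℕ) :
    Λ.d (z.big a n) = Λ.d a + n := by
  rw [big, Λ.d_comp _ _ (z.src_a_rng a ha n), z.d_seg]
  funext i; simp only [Pi.add_apply, Pi.sub_apply, Pi.zero_apply]; omega

theorem le_d_big (z : InfPath Λ) (a : Λ.M) (ha : Λ.src a = z.vert 0) (n : Fin k → ℕ) :
    n ≤ Λ.d (z.big a n) := by
  rw [z.d_big a ha]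
  intro i
  simp only [Pi.add_apply]
  omega

theorem src_big (z : InfPath Λ) (a : Λ.M) (ha : Λ.src a = z.vert 0) (n : Fin k → ℕ) :
    Λ.src (z.big a n) = z.vert n := by
  rw [big, Λ.src_comp _ _ (z.src_a_rng a ha n), z.src_seg']

/-- The initial piece of degree `n` of the path `a` followed by `z`. -/
noncomputable def W (z : InfPath Λ) (a : Λ.M) (ha : Λ.src a = z.vert 0) (n : Fin k → ℕ) :
    Λ.M := (Λ.fac (z.big a n) n (z.le_d_big a ha n)).1

/-- The remainder, of degree `d a`. -/
noncomputable def T (z : InfPath Λ) (a : Λ.M) (ha : Λ.src a = z.vert 0) (n : Fin k → ℕ) :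
    Λ.M := (Λ.fac (z.big a n) n (z.le_d_big a ha n)).2

theorem srcW_rngT (z : InfPath Λ) (a : Λ.M) (ha : Λ.src a = z.vert 0) (n : Fin k → ℕ) :
    Λ.src (z.W a ha n) = Λ.rng (z.T a ha n) :=
  (Λ.fac_spec _ _ _).1

theorem compWT (z : InfPath Λ) (a : Λ.M) (ha : Λ.src a = z.vert 0) (n : Fin k → ℕ) :
    Λ.comp (z.W a ha n) (z.T a ha n) = z.big a n :=
  (Λ.fac_spec _ _ _).2.1

theorem d_W (z : InfPath Λ) (a : Λ.M) (ha : Λ.src a = z.vert 0) (n : Fin k → ℕ) :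
    Λ.d (z.W a ha n) = n := (Λ.fac_spec _ _ _).2.2.1

theorem d_rng (b : Λ.M) : Λ.d (Λ.rng b) = 0 := by
  rw [← Λ.src_rng b, Λ.d_src]

theorem W_zero (z : InfPath Λ) (a : Λ.M) (ha : Λ.src a = z.vert 0) :
    z.W a ha 0 = Λ.rng a := by
  have hbig : z.big a 0 = a := by
    rw [big]
    have h0 : z.seg 0 0 zero_le = z.vert 0 := rfl
    rw [h0, ← ha, Λ.comp_src_self]
  have := Λ.fac_eq (u := Λ.rng a) (v := a) (m := (0 : Fin k → ℕ))
    (z.le_d_big a ha 0) (by rw [Λ.src_rng]) (by rw [hbig, Λ.rng_comp_self]) (d_rng a)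
  rw [W, this]

/-- Coherence: the first factor of `W n` at degree `m` is `W m`. -/
theorem W_fst (z : InfPath Λ) (a : Λ.M) (ha : Λ.src a = z.vert 0) {m n : Fin k → ℕ}
    (hmn : m ≤ n) (hm : m ≤ Λ.d (z.W a ha n)) :
    (Λ.fac (z.W a ha n) m hm).1 = z.W a ha m := by
  set u := (Λ.fac (z.W a ha n) m hm).1 with hu
  set v := (Λ.fac (z.W a ha n) m hm).2 with hv
  have h1 : Λ.src u = Λ.rng v := (Λ.fac_spec _ _ _).1
  have h2 : Λ.comp u v = z.W a ha n := (Λ.fac_spec _ _ _).2.1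
  have h3 : Λ.d u = m := (Λ.fac_spec _ _ _).2.2.1
  have hsv : Λ.src v = Λ.rng (z.T a ha n) := by
    have hs : Λ.src (Λ.comp u v) = Λ.src v := Λ.src_comp u v h1
    rw [h2] at hs
    rw [← hs, z.srcW_rngT a ha n]
  have hc1 : Λ.comp u (Λ.comp v (z.T a ha n)) = z.big a n := by
    rw [← Λ.comp_assoc u v _ h1 hsv, h2, z.compWT a ha n]
  have hr1 : Λ.src u = Λ.rng (Λ.comp v (z.T a ha n)) := by
    rw [Λ.rng_comp v _ hsv]; exact h1
  have hsT : Λ.src (z.T a ha m) = Λ.rng (z.seg m n hmn) := by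
    have hs : Λ.src (Λ.comp (z.W a ha m) (z.T a ha m)) = Λ.src (z.T a ha m) :=
      Λ.src_comp _ _ (z.srcW_rngT a ha m)
    rw [z.compWT a ha m, z.src_big a ha m] at hs
    rw [← hs, z.rng_seg']
  have hc2 : Λ.comp (z.W a ha m) (Λ.comp (z.T a ha m) (z.seg m n hmn)) = z.big a n := by
    rw [← Λ.comp_assoc _ _ _ (z.srcW_rngT a ha m) hsT, z.compWT a ha m, big,
      Λ.comp_assoc a _ _ (z.src_a_rng a ha m) (by rw [z.src_seg', z.rng_seg']),
      z.comp_seg]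
    rfl
  have hr2 : Λ.src (z.W a ha m) = Λ.rng (Λ.comp (z.T a ha m) (z.seg m n hmn)) := by
    rw [Λ.rng_comp _ _ hsT]; exact z.srcW_rngT a ha m
  have e1 := Λ.fac_eq (hmn.trans (z.le_d_big a ha n)) hr1 hc1 h3
  have e2 := Λ.fac_eq (hmn.trans (z.le_d_big a ha n)) hr2 hc2 (z.d_W a ha m)
  have e3 := e1.symm.trans e2
  exact (Prod.mk.inj e3).1

theorem le_d_W (z : InfPath Λ) (a : Λ.M) (ha : Λ.src a = z.vert 0) {m n : Fin k → ℕ}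
    (hmn : m ≤ n) : m ≤ Λ.d (z.W a ha n) := by
  rw [z.d_W a ha n]; exact hmn

theorem seg_self_snd (z : InfPath Λ) (a : Λ.M) (ha : Λ.src a = z.vert 0) (m : Fin k → ℕ) :
    (Λ.fac (z.W a ha m) m (z.le_d_W a ha le_rfl)).2 = Λ.src (z.W a ha m) := by
  have := Λ.fac_eq (u := z.W a ha m) (v := Λ.src (z.W a ha m)) (z.le_d_W a ha le_rfl)
    (by rw [Λ.rng_src]) (Λ.comp_src_self _) (z.d_W a ha m)
  rw [this]

/-- The path `a` followed by `z`. -/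
noncomputable def prepend (z : InfPath Λ) (a : Λ.M) (ha : Λ.src a = z.vert 0) : InfPath Λ where
  seg m n h := (Λ.fac (z.W a ha n) m (z.le_d_W a ha h)).2
  d_seg m n h := by
    have hd := (Λ.fac_spec (z.W a ha n) m (z.le_d_W a ha h)).2.2.2
    rw [hd, z.d_W a ha n]
  rng_seg m n h := by
    have h1 : Λ.rng (Λ.fac (z.W a ha n) m (z.le_d_W a ha h)).2
        = Λ.src (Λ.fac (z.W a ha n) m (z.le_d_W a ha h)).1 :=
      ((Λ.fac_spec _ _ _).1).symm
    rw [h1, z.W_fst a ha h, ← z.seg_self_snd a ha m]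
  src_seg m n h := by
    have h2 : Λ.comp (Λ.fac (z.W a ha n) m (z.le_d_W a ha h)).1
        (Λ.fac (z.W a ha n) m (z.le_d_W a ha h)).2 = z.W a ha n := (Λ.fac_spec _ _ _).2.1
    have hs := Λ.src_comp _ _ (Λ.fac_spec (z.W a ha n) m (z.le_d_W a ha h)).1
    rw [h2] at hs
    rw [← hs, ← z.seg_self_snd a ha n]
  comp_seg m n p h1 h2 := by
    show Λ.comp (Λ.fac (z.W a ha n) m (z.le_d_W a ha h1)).2
        (Λ.fac (z.W a ha p) n (z.le_d_W a ha h2)).2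
      = (Λ.fac (z.W a ha p) m (z.le_d_W a ha (h1.trans h2))).2
    set smn := (Λ.fac (z.W a ha n) m (z.le_d_W a ha h1)).2 with hsmn
    set snp := (Λ.fac (z.W a ha p) n (z.le_d_W a ha h2)).2 with hsnp
    have cn : Λ.comp (z.W a ha m) smn = z.W a ha n := by
      have hc := (Λ.fac_spec (z.W a ha n) m (z.le_d_W a ha h1)).2.1
      rwa [z.W_fst a ha h1] at hc
    have cp : Λ.comp (z.W a ha n) snp = z.W a ha p := by
      have hc := (Λ.fac_spec (z.W a ha p) n (z.le_d_W a ha h2)).2.1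
      rwa [z.W_fst a ha h2] at hc
    have rsmn : Λ.src (z.W a ha m) = Λ.rng smn := by
      have hc := (Λ.fac_spec (z.W a ha n) m (z.le_d_W a ha h1)).1
      rwa [z.W_fst a ha h1] at hc
    have rsnp : Λ.src (z.W a ha n) = Λ.rng snp := by
      have hc := (Λ.fac_spec (z.W a ha p) n (z.le_d_W a ha h2)).1
      rwa [z.W_fst a ha h2] at hc
    have ssmn : Λ.src smn = Λ.rng snp := by
      have hs := Λ.src_comp _ _ rsmn
      rw [cn] at hs
      rw [hs] at rsnp
      exact rsnp
    have hcomp : Λ.comp (z.W a ha m) (Λ.comp smn snp) = z.W a ha p := by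
      rw [← Λ.comp_assoc _ _ _ rsmn ssmn, cn, cp]
    have hrng : Λ.src (z.W a ha m) = Λ.rng (Λ.comp smn snp) := by
      rw [Λ.rng_comp _ _ ssmn]; exact rsmn
    have he := Λ.fac_eq (z.le_d_W a ha (h1.trans h2)) hrng hcomp (z.d_W a ha m)
    rw [he]

theorem prepend_vert_zero (z : InfPath Λ) (a : Λ.M) (ha : Λ.src a = z.vert 0) :
    (z.prepend a ha).vert 0 = Λ.rng a := by
  show (Λ.fac (z.W a ha 0) 0 _).2 = _
  rw [z.seg_self_snd a ha 0, z.W_zero a ha, Λ.src_rng]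

theorem W_add (z : InfPath Λ) (a : Λ.M) (ha : Λ.src a = z.vert 0) (s : Fin k → ℕ) :
    z.W a ha (s + Λ.d a) = z.big a s := by
  have hle : s ≤ s + Λ.d a := by intro i; simp only [Pi.add_apply]; omega
  have hd : Λ.d (z.big a s) = s + Λ.d a := by rw [z.d_big a ha s, add_comm]
  have hsrc : Λ.src (z.big a s) = Λ.rng (z.seg s (s + Λ.d a) hle) := by
    rw [z.src_big a ha s, z.rng_seg']
  have hcomp : Λ.comp (z.big a s) (z.seg s (s + Λ.d a) hle) = z.big a (s + Λ.d a) := by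
    rw [big, big, Λ.comp_assoc a _ _ (z.src_a_rng a ha s) (by rw [z.src_seg', z.rng_seg']),
      z.comp_seg]
  have he := Λ.fac_eq (z.le_d_big a ha (s + Λ.d a)) hsrc hcomp hd
  rw [W, he]

theorem prepend_shift (z : InfPath Λ) (a : Λ.M) (ha : Λ.src a = z.vert 0) :
    (z.prepend a ha).shift (Λ.d a) = z := by
  apply ext'
  intro m n hmn
  show (Λ.fac (z.W a ha (n + Λ.d a)) (m + Λ.d a) _).2 = z.seg m n hmn
  have hsrc : Λ.src (z.W a ha (m + Λ.d a)) = Λ.rng (z.seg m n hmn) := by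
    rw [z.W_add a ha m, z.src_big a ha m, z.rng_seg']
  have hcomp : Λ.comp (z.W a ha (m + Λ.d a)) (z.seg m n hmn) = z.W a ha (n + Λ.d a) := by
    rw [z.W_add a ha m, z.W_add a ha n, big, big,
      Λ.comp_assoc a _ _ (z.src_a_rng a ha m) (by rw [z.src_seg', z.rng_seg']), z.comp_seg]
  have he := Λ.fac_eq (z.le_d_W a ha (add_le_add hmn (le_refl (Λ.d a)))) hsrc hcomp
    (by rw [z.W_add a ha m, z.d_big a ha m, add_comm])
  rw [he]

end InfPath

namespace InfPath

variable {k : ℕ} {Λ : KGraph k}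

theorem shiftEquiv_of_shift_eq {w z : InfPath Λ} (q : Fin k → ℕ) (h : w.shift q = z) :
    ShiftEquiv z w := by
  rw [← h]; exact shiftEquiv_shift w q

theorem freqDiv_of_shift (w x : InfPath Λ) (q : Fin k → ℕ)
    (h : FreqDiv (w.shift q) x) : FreqDiv w x := by
  intro nn
  set s := nn ⊔ q with hs
  have hnns : nn ≤ s := le_sup_left
  have hqs : q ≤ s := le_sup_right
  have hsq : (s - q) + q = s := by
    funext i
    have h2 : q i ≤ s i := hqs i
    simp only [Pi.add_apply, Pi.sub_apply]
    omega
  obtain ⟨z', hz0, hzx⟩ := h (s - q)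
  have hz0' : z'.vert 0 = w.vert s := by
    rw [hz0, shift_vert]; exact w.vert_congr hsq
  have ha' : Λ.src (w.seg nn s hnns) = z'.vert 0 := by
    rw [w.src_seg', hz0']
  refine ⟨z'.prepend (w.seg nn s hnns) ha', ?_, ?_⟩
  · rw [z'.prepend_vert_zero, w.rng_seg']
  · exact ((shiftEquiv_of_shift_eq _ (z'.prepend_shift _ ha')).symm).trans hzx

theorem key_mono (x : InfPath Λ) (n n' : Fin k → ℕ) (hle : n ≤ n')
    (hP : ∀ z : InfPath Λ, z.vert 0 = x.vert n → FreqDiv z x → ShiftEquiv z x)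
    (z : InfPath Λ) (hz0 : z.vert 0 = x.vert n') (hfd : FreqDiv z x) : ShiftEquiv z x := by
  have ha : Λ.src (x.seg n n' hle) = z.vert 0 := by rw [x.src_seg', hz0]
  set w := z.prepend (x.seg n n' hle) ha with hw
  have hshift : w.shift (Λ.d (x.seg n n' hle)) = z := z.prepend_shift _ ha
  have hfw : FreqDiv w x := freqDiv_of_shift w x _ (by rw [hshift]; exact hfd)
  have hw0 : w.vert 0 = x.vert n := by
    rw [hw, z.prepend_vert_zero, x.rng_seg']
  have hwx : ShiftEquiv w x := hP w hw0 hfw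
  exact (shiftEquiv_of_shift_eq _ hshift).trans hwx

end InfPath

/-- Let `Λ` be a `k`-graph and `x ∈ Λ^∞`.  If there is `n ∈ ℕ^k` such that every
element of `x(n)Λ^∞` that is frequently divertable to `[x]` is shift equivalent to `x`,
then for every `y ∈ [x]` there is `m ∈ ℕ^k` such that every element of `y(m)Λ^∞` that
is frequently divertable to `[x]` is shift equivalent to `x`. -/
theorem stmt7 {k : ℕ} (hk : 1 ≤ k) (Λ : KGraph k) (x : InfPath Λ)
    (h : ∃ n : Fin k → ℕ, ∀ z : InfPath Λ, z.vert 0 = x.vert n →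
      InfPath.FreqDiv z x → InfPath.ShiftEquiv z x) :
    ∀ y : InfPath Λ, InfPath.ShiftEquiv y x →
      ∃ m : Fin k → ℕ, ∀ z : InfPath Λ, z.vert 0 = y.vert m →
        InfPath.FreqDiv z x → InfPath.ShiftEquiv z x := by
  obtain ⟨n, hn⟩ := h
  intro y hyx
  obtain ⟨n0, p, q, -, he⟩ := hyx
  refine ⟨n + p, fun z hz0 hfd => ?_⟩
  have hle : n ≤ n + q := by intro i; simp only [Pi.add_apply]; omega
  have hv : y.vert (n + p) = x.vert (n + q) := by
    calc y.vert (n + p) = (y.shift p).vert n := rfl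
      _ = (x.shift q).vert n := by rw [he]
      _ = x.vert (n + q) := rfl
  exact InfPath.key_mono x n (n + q) hle hn z (by rw [hz0, hv]) hfd
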